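/- If the learning algorithm A is OAROS with rate ε1, then for every probability measure D on Z and every n ≥ 1, | E_{T~D^n} E_{y~D} E_{y'~D} [ ℓ(A_{n+1}(T ⊕ y'), y) − ℓ(A_{n+1}(T ⊕ y), y) ] | ≤ ε1(n). -/

import Mathlib

open MeasureTheory

noncomputable section

/-- The i.i.d. sample measure of size `n` drawn from `D`. -/
def iid {Z : Type*} [MeasurableSpace Z] (D : Measure Z) (n : ℕ) :
    Measure (Fin n → Z) :=
  Measure.pi fun _ => D

/-- The learning algorithm is symmetric: invariant under permutations of the
entries of its input tuple. -/
def IsSymmetricAlg {Z H : Type*} (A : ∀ k : ℕ, (Fin k → Z) → H) : Prop :=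
  ∀ (k : ℕ) (σ : Equiv.Perm (Fin k)) (S : Fin k → Z), A k (S ∘ σ) = A k S

/-- For each `k`, the map `(S, z) ↦ ℓ(A k S, z)` is measurable and bounded. -/
def MeasBddAlg {Z H : Type*} [MeasurableSpace Z] (ℓ : H → Z → ℝ)
    (A : ∀ k : ℕ, (Fin k → Z) → H) : Prop :=
  ∀ k : ℕ, Measurable (fun p : (Fin k → Z) × Z => ℓ (A k p.1) p.2) ∧
    ∃ C : ℝ, ∀ (S : Fin k → Z) (z : Z), ℓ (A k S) z ≤ C

/-- On-Average-Replace-One-Stability with rate `ε1`. -/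
def OAROS {Z H : Type*} [MeasurableSpace Z] (ℓ : H → Z → ℝ)
    (A : ∀ k : ℕ, (Fin k → Z) → H) (ε1 : ℕ → ℝ) : Prop :=
  Antitone ε1 ∧
  ∀ (D : Measure Z), IsProbabilityMeasure D → ∀ n : ℕ, 1 ≤ n →
    ∫ T, ∫ x',
        (n : ℝ)⁻¹ * ∑ i : Fin n,
          |ℓ (A n T) (T i) - ℓ (A n (Function.update T i x')) (T i)|
      ∂D ∂(iid D n) ≤ ε1 n

/-- bounded measurable functions are integrable on finite measures -/
lemma integrable_of_bdd' {α : Type*} [MeasurableSpace α] {μ : Measure α} [IsFiniteMeasure μ]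
    {φ : α → ℝ} (hφ : Measurable φ) {C : ℝ} (h : ∀ a, |φ a| ≤ C) : Integrable φ μ :=
  (integrable_const C).mono' hφ.aestronglyMeasurable
    (Filter.Eventually.of_forall fun a => by simpa [Real.norm_eq_abs] using h a)

/-- Precomposition with a permutation of coordinates preserves the i.i.d. measure,
even jointly with an extra independent coordinate. -/
lemma perm_integral_eq {Z : Type*} [MeasurableSpace Z] (D : Measure Z)
    [IsProbabilityMeasure D] {k : ℕ} (σ : Equiv.Perm (Fin k))
    (G : ((Fin k → Z) × Z) → ℝ) :
    ∫ p, G ((p.1 ∘ σ : Fin k → Z), p.2) ∂((iid D k).prod D)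
      = ∫ p, G p ∂((iid D k).prod D) := by
  have hco : ⇑(MeasurableEquiv.piCongrLeft (fun _ : Fin k => Z) σ.symm)
      = fun S : Fin k → Z => S ∘ σ := by
    funext S
    funext j
    have h1 := MeasurableEquiv.piCongrLeft_apply_apply (β := fun _ : Fin k => Z) σ.symm S (σ j)
    rw [Equiv.symm_apply_apply] at h1
    exact h1
  haveI : IsProbabilityMeasure (iid D k) := by unfold iid; infer_instance
  have hmp : MeasurePreserving (fun S : Fin k → Z => S ∘ σ) (iid D k) (iid D k) := by
    have h := measurePreserving_piCongrLeft (fun _ : Fin k => D) σ.symm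
    rw [hco] at h
    unfold iid
    exact h
  have hemb : MeasurableEmbedding (fun S : Fin k → Z => S ∘ σ) := by
    have h := (MeasurableEquiv.piCongrLeft (fun _ : Fin k => Z) σ.symm).measurableEmbedding
    rwa [hco] at h
  exact (hmp.prod (MeasurePreserving.id D)).integral_comp
    (hemb.prodMap MeasurableEmbedding.id) G

/-- for an OAROS-stable algorithm,
`| E_T E_y E_y' [ ℓ(A(T⊕y'), y) − ℓ(A(T⊕y), y) ] | ≤ ε1(n)`. -/
theorem stmt_2 {Z H : Type*} [MeasurableSpace Z] (ℓ : H → Z → ℝ)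
    (A : ∀ k : ℕ, (Fin k → Z) → H) (ε1 : ℕ → ℝ)
    (hℓ : ∀ (h : H) (z : Z), 0 ≤ ℓ h z)
    (hsym : IsSymmetricAlg A) (hmb : MeasBddAlg ℓ A)
    (hst : OAROS ℓ A ε1)
    (D : Measure Z) [IsProbabilityMeasure D] (n : ℕ) (hn : 1 ≤ n) :
    |∫ T, ∫ y, ∫ y',
        (ℓ (A (n + 1) (Fin.snoc T y')) y - ℓ (A (n + 1) (Fin.snoc T y)) y)
      ∂D ∂D ∂(iid D n)| ≤ ε1 n := by
  haveI hPn : IsProbabilityMeasure (iid D n) := by unfold iid; infer_instance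
  haveI hPm : IsProbabilityMeasure (iid D (n + 1)) := by unfold iid; infer_instance
  obtain ⟨hmeas, C, hC⟩ := hmb (n + 1)
  set μ3 : Measure ((Fin n → Z) × (Z × Z)) := (iid D n).prod (D.prod D) with hμ3
  set ρ : Measure ((Fin (n + 1) → Z) × Z) := (iid D (n + 1)).prod D with hρ
  have habs : ∀ (S S' : Fin (n + 1) → Z) (z : Z),
      |ℓ (A (n + 1) S) z - ℓ (A (n + 1) S') z| ≤ C := by
    intro S S' z
    rw [abs_sub_le_iff]
    constructor
    · linarith [hC S z, hℓ (A (n + 1) S') z]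
    · linarith [hC S' z, hℓ (A (n + 1) S) z]
  have hsnoc : Measurable (fun p : (Fin n → Z) × Z => (Fin.snoc p.1 p.2 : Fin (n + 1) → Z)) := by
    rw [measurable_pi_iff]
    intro j
    refine Fin.lastCases ?_ (fun i => ?_) j
    · simpa only [Fin.snoc_last] using measurable_snd
    · simp only [Fin.snoc_castSucc]
      exact (measurable_pi_apply i).comp measurable_fst
  set f : (Fin n → Z) × (Z × Z) → ℝ := fun p =>
    ℓ (A (n + 1) (Fin.snoc p.1 p.2.2)) p.2.1 - ℓ (A (n + 1) (Fin.snoc p.1 p.2.1)) p.2.1 with hf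
  have hfmeas : Measurable f := by
    apply Measurable.sub
    · exact hmeas.comp ((hsnoc.comp (measurable_fst.prodMk
        (measurable_snd.comp measurable_snd))).prodMk (measurable_fst.comp measurable_snd))
    · exact hmeas.comp ((hsnoc.comp (measurable_fst.prodMk
        (measurable_fst.comp measurable_snd))).prodMk (measurable_fst.comp measurable_snd))
  have hfbdd : ∀ p, |f p| ≤ C := fun p => habs _ _ _
  have hfint : Integrable f μ3 := integrable_of_bdd' hfmeas hfbdd
  set g : Fin (n + 1) → ((Fin (n + 1) → Z) × Z) → ℝ := fun i p =>
    |ℓ (A (n + 1) p.1) (p.1 i) - ℓ (A (n + 1) (Function.update p.1 i p.2)) (p.1 i)| with hg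
  have hgmeas : ∀ i, Measurable (g i) := by
    intro i
    apply Measurable.abs
    apply Measurable.sub
    · exact hmeas.comp (measurable_fst.prodMk ((measurable_pi_apply i).comp measurable_fst))
    · exact hmeas.comp (measurable_update'.prodMk ((measurable_pi_apply i).comp measurable_fst))
  have hgbdd : ∀ i p, |g i p| ≤ C := by
    intro i p
    simp only [hg, abs_abs]
    exact habs _ _ _
  have hgint : ∀ i, Integrable (g i) ρ := fun i => integrable_of_bdd' (hgmeas i) (hgbdd i)
  -- exchangeability : every summand integral equals the last one
  have hswap : ∀ i : Fin (n + 1), ∫ p, g i p ∂ρ = ∫ p, g (Fin.last n) p ∂ρ := by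
    intro i
    have hpt : ∀ (S : Fin (n + 1) → Z) (x' : Z),
        g (Fin.last n) ((S ∘ (Equiv.swap i (Fin.last n)) : Fin (n + 1) → Z), x') = g i (S, x') := by
      intro S x'
      have hupd : Function.update (S ∘ (Equiv.swap i (Fin.last n)) : Fin (n + 1) → Z)
          (Fin.last n) x' = (Function.update S i x') ∘ (Equiv.swap i (Fin.last n)) := by
        funext k
        rcases eq_or_ne k (Fin.last n) with rfl | hk
        · have hsr : (Equiv.swap i (Fin.last n)) (Fin.last n) = i :=
            Equiv.swap_apply_right i (Fin.last n)
          simp only [Function.comp_apply]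
          rw [hsr]
          simp
        · have hne : (Equiv.swap i (Fin.last n)) k ≠ i := by
            intro hcon
            exact hk ((Equiv.swap i (Fin.last n)).injective
              (hcon.trans (Equiv.swap_apply_right i (Fin.last n)).symm))
          simp only [Function.update_of_ne hk, Function.comp_apply, Function.update_of_ne hne]
      simp only [hg, hupd, hsym (n + 1) (Equiv.swap i (Fin.last n)), Function.comp_apply,
        Equiv.swap_apply_right]
    calc ∫ p, g i p ∂ρ
        = ∫ p, g (Fin.last n) ((p.1 ∘ (Equiv.swap i (Fin.last n)) : Fin (n + 1) → Z), p.2) ∂ρ := by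
          refine integral_congr_ae (Filter.Eventually.of_forall fun p => ?_)
          exact (hpt p.1 p.2).symm
      _ = ∫ p, g (Fin.last n) p ∂ρ := by
          rw [hρ]
          exact perm_integral_eq D (Equiv.swap i (Fin.last n)) (g (Fin.last n))
  -- the stability bound applied to the last summand
  have key : ∫ p, g (Fin.last n) p ∂ρ ≤ ε1 (n + 1) := by
    have hsum := hst.2 D inferInstance (n + 1) (by omega)
    have hGint : Integrable (fun p => (((n + 1 : ℕ) : ℝ))⁻¹ * ∑ i : Fin (n + 1), g i p) ρ :=
      (integrable_finset_sum _ fun i _ => hgint i).const_mul _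
    have h4 : ∫ p, (((n + 1 : ℕ) : ℝ))⁻¹ * ∑ i : Fin (n + 1), g i p ∂ρ
        = ∫ p, g (Fin.last n) p ∂ρ := by
      rw [integral_const_mul, integral_finset_sum _ (fun i _ => hgint i),
        Finset.sum_congr rfl (fun i _ => hswap i), Finset.sum_const, Finset.card_univ,
        Fintype.card_fin, nsmul_eq_mul, ← mul_assoc, inv_mul_cancel₀, one_mul]
      exact Nat.cast_ne_zero.2 (Nat.succ_ne_zero n)
    have h5 : ∫ p, (((n + 1 : ℕ) : ℝ))⁻¹ * ∑ i : Fin (n + 1), g i p ∂ρ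
        = ∫ T, ∫ x', (((n + 1 : ℕ) : ℝ))⁻¹ * ∑ i : Fin (n + 1),
            |ℓ (A (n + 1) T) (T i) - ℓ (A (n + 1) (Function.update T i x')) (T i)|
          ∂D ∂(iid D (n + 1)) := by
      rw [hρ] at hGint ⊢
      rw [integral_prod _ hGint]
    exact le_of_eq (h4.symm.trans h5) |>.trans hsum
  -- transport along snoc
  have hQ : ∫ p, |f p| ∂μ3 = ∫ p, g (Fin.last n) p ∂ρ := by
    set Φ : ((Z × (Fin n → Z)) × Z) ≃ᵐ ((Fin n → Z) × (Z × Z)) :=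
      ((MeasurableEquiv.prodComm (α := Z) (β := Fin n → Z)).prodCongr
        (MeasurableEquiv.refl Z)).trans MeasurableEquiv.prodAssoc with hΦ
    have hΦmp : MeasurePreserving (⇑Φ) ((D.prod (iid D n)).prod D) μ3 := by
      have h1 := (Measure.measurePreserving_swap (μ := D) (ν := iid D n)).prod (MeasurePreserving.id D)
      have h2 := measurePreserving_prodAssoc (iid D n) D D
      rw [hμ3]
      exact h2.comp h1
    set e2 : (Z × (Fin n → Z)) ≃ᵐ (Fin (n + 1) → Z) :=
      (MeasurableEquiv.piFinSuccAbove (fun _ : Fin (n + 1) => Z) (Fin.last n)).symm with he2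
    have he2mp : MeasurePreserving (⇑e2) (D.prod (iid D n)) (iid D (n + 1)) := by
      rw [he2]
      unfold iid
      exact MeasurePreserving.symm _ (measurePreserving_piFinSuccAbove (fun _ => D) (Fin.last n))
    have he2app : ∀ (y : Z) (T : Fin n → Z), e2 (y, T) = Fin.snoc T y := by
      intro y T
      rw [he2, MeasurableEquiv.piFinSuccAbove_symm_apply]
      simp [Fin.insertNth_last', Fin.snocEquiv]
    have hmp2 : MeasurePreserving
        (fun q : (Z × (Fin n → Z)) × Z => ((e2 q.1 : Fin (n + 1) → Z), q.2))
        ((D.prod (iid D n)).prod D) ρ := by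
      rw [hρ]
      exact he2mp.prod (MeasurePreserving.id D)
    have hemb2 : MeasurableEmbedding
        (fun q : (Z × (Fin n → Z)) × Z => ((e2 q.1 : Fin (n + 1) → Z), q.2)) :=
      e2.measurableEmbedding.prodMap MeasurableEmbedding.id
    calc ∫ p, |f p| ∂μ3
        = ∫ q, |f (Φ q)| ∂((D.prod (iid D n)).prod D) :=
          (hΦmp.integral_comp Φ.measurableEmbedding _).symm
      _ = ∫ q, g (Fin.last n) ((e2 q.1 : Fin (n + 1) → Z), q.2) ∂((D.prod (iid D n)).prod D) := by
          refine integral_congr_ae (Filter.Eventually.of_forall fun q => ?_)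
          obtain ⟨⟨y, T⟩, x'⟩ := q
          have hΦq : Φ ((y, T), x') = (T, (y, x')) := rfl
          dsimp only
          rw [hΦq, he2app y T]
          simp only [hg, hf]
          rw [Fin.snoc_last, Fin.update_snoc_last]
          exact abs_sub_comm _ _
      _ = ∫ p, g (Fin.last n) p ∂ρ := hmp2.integral_comp hemb2 _
  -- rewrite the goal as a single product integral
  have hLHS : ∫ T, ∫ y, ∫ y',
        (ℓ (A (n + 1) (Fin.snoc T y')) y - ℓ (A (n + 1) (Fin.snoc T y)) y)
      ∂D ∂D ∂(iid D n) = ∫ p, f p ∂μ3 := by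
    rw [hμ3] at hfint ⊢
    rw [integral_prod _ hfint]
    refine integral_congr_ae (Filter.Eventually.of_forall fun T => ?_)
    have hint2 : Integrable (fun q : Z × Z => f (T, q)) (D.prod D) :=
      integrable_of_bdd' (hfmeas.comp measurable_prodMk_left) (fun q => hfbdd (T, q))
    dsimp only
    rw [integral_prod _ hint2]
  rw [hLHS]
  calc |∫ p, f p ∂μ3|
      ≤ ∫ p, |f p| ∂μ3 := by
        simpa [Real.norm_eq_abs] using norm_integral_le_integral_norm (μ := μ3) f
    _ = ∫ p, g (Fin.last n) p ∂ρ := hQ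
    _ ≤ ε1 (n + 1) := key
    _ ≤ ε1 n := hst.1 (Nat.le_succ n)
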